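/- arXiv:1703.04339 — 2 statements merged into one kernel-verified Lean document; each statement's English description precedes it below -/
import Mathlib

section
/- Let X ⊆ I^∞ be compact and nonempty, (n_j) a strictly increasing sequence in ℕ, and (P_j) compact subsets P_j ⊆ I^{n_j} with X ⊆ int_{I^∞}(P_j × I^∞_{n_j}) ⊆ P_j × I^∞_{n_j} ⊆ N(X, 2/j) for all j and p_{n_j}^{n_{j+1}}(P_{j+1}) ⊆ int_{I^{n_j}}(P_j). Fix j ∈ ℕ and a closed subset B_j of P_j; for k ≥ j set B_k = (p_{n_j}^{n_k})^{-1}(B_j) ∩ P_k, and set B_{j,∞} = p_{n_j,∞}^{-1}(B_j) ∩ X. Then for every open neighborhood S of B_{j,∞} in I^∞ there exists k ≥ j such that B_l ⊆ S for all l ≥ k. -/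
open Set Filter Topology

noncomputable section

/-- The Hilbert cube `I^∞ = ∏_{i ≥ 1} [0,1]`; the index `i : ℕ` represents coordinate `i + 1`. -/
abbrev Iinf : Type := ℕ → unitInterval

/-- The metric `ρ(x, y) = Σ_{i=1}^∞ |x_i − y_i| / 2^i` on the Hilbert cube (whose topology is
the product topology carried by `Iinf`). -/
def rho (x y : Iinf) : ℝ := ∑' i : ℕ, |((x i : ℝ)) - (y i : ℝ)| / 2 ^ (i + 1)

/-- `I^k`, identified with the subset `I^k × {0}` of `I^∞` (all coordinates beyond `k` zero). -/
def cubeFin (k : ℕ) : Set Iinf := {x | ∀ i, k ≤ i → x i = 0}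

/-- `p_{k,∞} : I^∞ → I^k`, projection to the first `k` coordinates.  For `j ≤ k` it also
serves as `p_j^k : I^k → I^j`. -/
def proj (k : ℕ) (x : Iinf) : Iinf := fun i => if i < k then x i else 0

/-- `P × I^∞_k = {x ∈ I^∞ : p_{k,∞}(x) ∈ P}`, for `P ⊆ I^k`. -/
def cyl (k : ℕ) (P : Set Iinf) : Set Iinf := {x | proj k x ∈ P}

/-- `N(A, ε)`, the open `ε`-neighborhood of `A` in `(I^∞, ρ)`. -/
def nbhd (A : Set Iinf) (ε : ℝ) : Set Iinf := {x | ∃ a ∈ A, rho x a < ε}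

/-- The interior of `P` relative to the subspace `I^m ⊆ I^∞`. -/
def relInterior (m : ℕ) (P : Set Iinf) : Set Iinf :=
  {x ∈ cubeFin m | ∃ U : Set Iinf, IsOpen U ∧ x ∈ U ∧ U ∩ cubeFin m ⊆ P}


lemma rho_summable (x y : Iinf) :
    Summable fun i : ℕ => |((x i : ℝ)) - (y i : ℝ)| / 2 ^ (i + 1) := by
  have hle : ∀ i : ℕ, |((x i : ℝ)) - (y i : ℝ)| / 2 ^ (i + 1) ≤ (1 / 2 : ℝ) ^ i := by
    intro i
    have hx := (x i).2
    have hy := (y i).2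
    simp only [Set.mem_Icc] at hx hy
    have habs : |((x i : ℝ)) - (y i : ℝ)| ≤ 1 := by
      rw [abs_le]; constructor <;> linarith [hx.1, hx.2, hy.1, hy.2]
    have h2 : (0 : ℝ) < 2 ^ (i + 1) := by positivity
    rw [div_le_iff₀ h2]
    have he : (1 / 2 : ℝ) ^ i * 2 ^ (i + 1) = 2 := by
      rw [one_div, inv_pow, pow_succ]
      field_simp
    rw [he]; linarith
  exact Summable.of_nonneg_of_le (fun i => by positivity) hle summable_geometric_two

lemma rho_nonneg (x y : Iinf) : 0 ≤ rho x y :=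
  tsum_nonneg fun i => by positivity

lemma rho_coord (x y : Iinf) (i : ℕ) :
    |((x i : ℝ)) - (y i : ℝ)| ≤ 2 ^ (i + 1) * rho x y := by
  have h := Summable.le_tsum (rho_summable x y) i (fun m _ => by positivity)
  have h2 : (0 : ℝ) < 2 ^ (i + 1) := by positivity
  rw [div_le_iff₀ h2] at h
  calc |((x i : ℝ)) - (y i : ℝ)| ≤ rho x y * 2 ^ (i + 1) := h
    _ = 2 ^ (i + 1) * rho x y := mul_comm _ _

lemma continuous_proj (k : ℕ) : Continuous (proj k) := by
  apply continuous_pi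
  intro i
  by_cases h : i < k
  · simpa [proj, h] using continuous_apply i
  · simpa [proj, h] using continuous_const

lemma proj_eq_self_of_cubeFin {k : ℕ} {x : Iinf} (hx : x ∈ cubeFin k) :
    proj k x = x := by
  funext i
  by_cases h : i < k
  · simp [proj, h]
  · simp [proj, h, hx i (not_lt.mp h)]

/-- Lemma `endset`(1).  In the setup of the polyhedral neighborhood
sequence, fix `j` and a closed `B ⊆ P_j`; for `k ≥ j` let `B_k = (p_{n_j}^{n_k})⁻¹(B) ∩ P_k`
and `B_{j,∞} = p_{n_j,∞}⁻¹(B) ∩ X`.  Then for every open neighborhood `S` of `B_{j,∞}` in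
`I^∞` there is `k ≥ j` with `B_l ⊆ S` for all `l ≥ k`. -/
theorem eventually_in_neighborhood
    (X : Set Iinf) (hXne : X.Nonempty) (hXc : IsCompact X)
    (n : ℕ → ℕ) (hn : StrictMono n)
    (P : ℕ → Set Iinf) (hPc : ∀ j : ℕ, 1 ≤ j → IsCompact (P j))
    (hPcube : ∀ j : ℕ, 1 ≤ j → P j ⊆ cubeFin (n j))
    (hint : ∀ j : ℕ, 1 ≤ j → X ⊆ interior (cyl (n j) (P j)))
    (hnbhd : ∀ j : ℕ, 1 ≤ j → cyl (n j) (P j) ⊆ nbhd X (2 / (j : ℝ)))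
    (hchain : ∀ j : ℕ, 1 ≤ j → proj (n j) '' P (j + 1) ⊆ relInterior (n j) (P j))
    (j : ℕ) (hj : 1 ≤ j) (B : Set Iinf) (hBcl : IsClosed B) (hBP : B ⊆ P j)
    (S : Set Iinf) (hS : IsOpen S) (hBS : proj (n j) ⁻¹' B ∩ X ⊆ S) :
    ∃ k : ℕ, j ≤ k ∧ ∀ l : ℕ, k ≤ l → proj (n j) ⁻¹' B ∩ P l ⊆ S := by
  by_contra hcon
  push_neg at hcon
  have h' : ∀ m : ℕ, ∃ l, m + j ≤ l ∧ ∃ x, x ∈ proj (n j) ⁻¹' B ∩ P l ∧ x ∉ S := by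
    intro m
    obtain ⟨l, hl, hns⟩ := hcon (m + j) (Nat.le_add_left j m)
    obtain ⟨x, hx, hxS⟩ := Set.not_subset.mp hns
    exact ⟨l, hl, x, hx, hxS⟩
  choose l hl x hx hxS using h'
  have hl1 : ∀ m, 1 ≤ l m := fun m => le_trans (le_trans hj (Nat.le_add_left j m)) (hl m)
  have hcyl : ∀ m, x m ∈ cyl (n (l m)) (P (l m)) := by
    intro m
    have hmem : x m ∈ P (l m) := (hx m).2
    have : proj (n (l m)) (x m) = x m :=
      proj_eq_self_of_cubeFin (hPcube (l m) (hl1 m) hmem)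
    simpa [cyl, this] using hmem
  have hnb : ∀ m, x m ∈ nbhd X (2 / (l m : ℝ)) := fun m =>
    hnbhd (l m) (hl1 m) (hcyl m)
  choose a haX hrho using hnb
  obtain ⟨z, hzX, φ, hφ, hconv⟩ := hXc.tendsto_subseq haX
  -- rho (x (φ m)) (a (φ m)) → 0
  have hrho0 : Tendsto (fun m => rho (x (φ m)) (a (φ m))) atTop (𝓝 0) := by
    have hb : ∀ m : ℕ, rho (x (φ m)) (a (φ m)) ≤ 2 / ((m : ℝ) + 1) := by
      intro m
      have h1 : (m : ℝ) + 1 ≤ (l (φ m) : ℝ) := by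
        have : m + 1 ≤ l (φ m) := by
          have := hl (φ m)
          have hφm : m ≤ φ m := hφ.le_apply
          omega
        exact_mod_cast this
      have hpos : (0 : ℝ) < (m : ℝ) + 1 := by positivity
      have := (hrho m).le
      calc rho (x (φ m)) (a (φ m)) ≤ 2 / (l (φ m) : ℝ) := (hrho (φ m)).le
        _ ≤ 2 / ((m : ℝ) + 1) := by
            apply div_le_div_of_nonneg_left (by norm_num) hpos h1
    have htend : Tendsto (fun m : ℕ => 2 / ((m : ℝ) + 1)) atTop (𝓝 0) := by
      have := tendsto_one_div_add_atTop_nhds_zero_nat (𝕜 := ℝ)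
      have h2 : Tendsto (fun m : ℕ => 2 * (1 / ((m : ℝ) + 1))) atTop (𝓝 (2 * 0)) :=
        this.const_mul 2
      simpa [mul_one_div, div_eq_mul_inv] using h2
    exact squeeze_zero (fun m => rho_nonneg _ _) hb htend
  -- x (φ m) → z
  have hxz : Tendsto (fun m => x (φ m)) atTop (𝓝 z) := by
    rw [tendsto_pi_nhds]
    intro i
    rw [tendsto_subtype_rng]
    have haz : Tendsto (fun m => ((a (φ m) i : ℝ))) atTop (𝓝 (z i : ℝ)) := by
      have : Tendsto (fun m => (a ∘ φ) m i) atTop (𝓝 (z i)) :=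
        (tendsto_pi_nhds.mp hconv) i
      exact ((continuous_subtype_val.tendsto _).comp this)
    have hdiff : Tendsto (fun m => ((x (φ m) i : ℝ)) - ((a (φ m) i : ℝ))) atTop (𝓝 0) := by
      have hb : Tendsto (fun m => (2:ℝ) ^ (i+1) * rho (x (φ m)) (a (φ m))) atTop (𝓝 0) := by
        simpa using hrho0.const_mul ((2:ℝ) ^ (i+1))
      exact squeeze_zero_norm (fun m => rho_coord (x (φ m)) (a (φ m)) i) hb
    have : Tendsto (fun m => ((x (φ m) i : ℝ))) atTop (𝓝 ((z i : ℝ) + 0)) := by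
      have := haz.add hdiff
      simpa using this.congr (fun m => by ring)
    rw [add_zero] at this
    exact this
  -- z ∈ B-preimage ∩ X
  have hzB : proj (n j) z ∈ B := by
    have h1 : Tendsto (fun m => proj (n j) (x (φ m))) atTop (𝓝 (proj (n j) z)) :=
      ((continuous_proj (n j)).tendsto z).comp hxz
    exact hBcl.mem_of_tendsto h1 (Eventually.of_forall fun m => (hx (φ m)).1)
  have hzS : z ∈ S := hBS ⟨hzB, hzX⟩
  have : ∀ᶠ m in atTop, x (φ m) ∈ S := hxz.eventually (hS.mem_nhds hzS)
  obtain ⟨m, hm⟩ := this.exists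
  exact hxS (φ m) hm
end
end

section
/- Let X ⊆ I^∞ be compact and nonempty, (m_i) a strictly increasing sequence in ℕ, and ε_i, δ_i > 0 satisfying: (a) for all u, v ∈ I^∞ and i ∈ ℕ, ρ(u,v) < ε_{i+1} implies ρ(p_{m_i,∞}(u), p_{m_i,∞}(v)) < δ_i; (b) 5·2^{-m_i} < ε_i; (c) δ_i < 2^{1−m_i}. Let M_i ⊆ I^{m_i} be nonempty compact sets with M_i ⊆ N(X, η_i) for some η_i → 0, and let h_i : M_{i+1} → M_i be continuous with ρ(h_i(u), p_{m_i,∞}(u)) < δ_i/2 for all u ∈ M_{i+1}. Let M = lim (M_i, h_i) and let π : M → X be the map sending each thread to the limit of its associated sequence. For x ∈ X put B_{x,i} = N̄(p_{m_i,∞}(x), 2δ_i) ∩ M_i and B^#_{x,i} = N̄(p_{m_i,∞}(x), ε_i) ∩ M_i. Then for every x ∈ X: (1) B_{x,i} ⊆ B^#_{x,i} and h_i(B^#_{x,i+1}) ⊆ B_{x,i} for all i; and (2) π^{-1}(x) = lim (B_{x,i}, h_i|B_{x,i+1}) = lim (B^#_{x,i}, h_i|B^#_{x,i+1}). -/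
open Set Filter Topology

noncomputable section

lemma coord_bound (x y : Iinf) (n : ℕ) : |((x n : ℝ)) - y n| ≤ 1 := by
  have h1 := (x n).2; have h2 := (y n).2
  simp only [unitInterval, mem_Icc] at h1 h2
  rw [abs_le]; constructor <;> linarith

lemma half_pow (n : ℕ) : (1:ℝ)/2/2^n = 1/2^(n+1) := by rw [pow_succ]; ring

lemma coord_div_le (x y : Iinf) (n : ℕ) : |((x n : ℝ)) - y n| / 2 ^ (n + 1) ≤ 1/2/2^n := by
  rw [half_pow]
  apply div_le_div_of_nonneg_right (coord_bound x y n) (by positivity) |>.trans_eq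
  norm_num

lemma summable_rho (x y : Iinf) : Summable (fun n => |((x n : ℝ)) - y n| / 2 ^ (n + 1)) :=
  Summable.of_nonneg_of_le (fun n => by positivity) (coord_div_le x y) (summable_geometric_two' 1)

lemma rho_self (x : Iinf) : rho x x = 0 := by
  unfold rho; simp

lemma rho_symm (x y : Iinf) : rho x y = rho y x := by
  unfold rho; congr 1; funext n; rw [abs_sub_comm]

lemma rho_triangle (x y z : Iinf) : rho x z ≤ rho x y + rho y z := by
  unfold rho
  rw [← Summable.tsum_add (summable_rho x y) (summable_rho y z)]
  apply Summable.tsum_le_tsum _ (summable_rho x z) ((summable_rho x y).add (summable_rho y z))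
  intro n
  rw [← add_div]
  gcongr
  calc |((x n:ℝ)) - z n| = |((x n:ℝ) - y n) + ((y n:ℝ) - z n)| := by ring_nf
    _ ≤ |((x n:ℝ)) - y n| + |((y n:ℝ)) - z n| := abs_add_le _ _

lemma coord_le_rho (x y : Iinf) (n : ℕ) : |((x n : ℝ)) - y n| / 2 ^ (n + 1) ≤ rho x y :=
  Summable.le_tsum (summable_rho x y) n (fun _ _ => by positivity)

lemma rho_proj_self (k : ℕ) (x : Iinf) : rho (proj k x) x ≤ 1 / 2 ^ k := by
  have hsum : Summable (fun n : ℕ => if n < k then (0:ℝ) else 1/2/2^n) := by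
    apply Summable.of_nonneg_of_le (fun n => by positivity) (fun n => ?_) (summable_geometric_two' 1)
    split
    · positivity
    · exact le_rfl
  have h1 : rho (proj k x) x ≤ ∑' n : ℕ, if n < k then (0:ℝ) else 1/2/2^n := by
    apply Summable.tsum_le_tsum _ (summable_rho _ _) hsum
    intro n
    by_cases hn : n < k
    · simp [proj, hn]
    · simp only [proj, if_neg hn, half_pow]
      have := coord_bound (proj k x) x n
      simp only [proj, if_neg hn] at this
      exact div_le_div_of_nonneg_right this (by positivity) |>.trans (by norm_num)
  refine h1.trans ?_
  rw [← Summable.sum_add_tsum_nat_add k hsum]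
  have h2 : ∀ n ∈ Finset.range k, (if n < k then (0:ℝ) else 1/2/2^n) = 0 := by
    intro n hn; simp [Finset.mem_range.mp hn]
  rw [Finset.sum_congr rfl h2]
  simp only [Finset.sum_const_zero, zero_add]
  have h3 : ∀ n : ℕ, (if n + k < k then (0:ℝ) else 1/2/2^(n+k)) = (1/2^k)/2/2^n := by
    intro n
    rw [if_neg (by omega), pow_add]
    ring
  calc (∑' n : ℕ, if n + k < k then (0:ℝ) else 1/2/2^(n+k)) = ∑' n : ℕ, (1/2^k:ℝ)/2/2^n := by
        congr 1; funext n; exact h3 n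
    _ ≤ 1/2^k := le_of_eq (tsum_geometric_two' _)

lemma rho_proj_le (k : ℕ) (x y : Iinf) : rho (proj k x) (proj k y) ≤ rho x y := by
  apply Summable.tsum_le_tsum _ (summable_rho _ _) (summable_rho _ _)
  intro n
  by_cases hn : n < k
  · simp [proj, hn]
  · simp [proj, hn]
    positivity

lemma proj_proj {j k : ℕ} (hjk : j ≤ k) (x : Iinf) : proj j (proj k x) = proj j x := by
  funext n
  simp only [proj]
  by_cases hn : n < j
  · simp [hn, hn.trans_le hjk]
  · simp [hn]

def mix (t : ℝ) (ht0 : 0 ≤ t) (ht1 : t ≤ 1) (u v : Iinf) : Iinf := fun n =>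
  ⟨(1 - t) * (v n : ℝ) + t * (u n : ℝ), by
    have h1 := (u n).2; have h2 := (v n).2
    simp only [unitInterval, mem_Icc] at h1 h2 ⊢
    constructor
    · have : 0 ≤ (1 - t) * (v n : ℝ) := mul_nonneg (by linarith) h2.1
      have : 0 ≤ t * (u n : ℝ) := mul_nonneg ht0 h1.1
      linarith
    · nlinarith [h1.2, h2.2]⟩

lemma rho_mix (t : ℝ) (ht0 : 0 ≤ t) (ht1 : t ≤ 1) (u v : Iinf) :
    rho u (mix t ht0 ht1 u v) = (1 - t) * rho u v := by
  unfold rho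
  rw [← tsum_mul_left]
  congr 1; funext n
  simp only [mix]
  rw [show (u n : ℝ) - ((1 - t) * (v n : ℝ) + t * (u n : ℝ)) = (1-t) * ((u n : ℝ) - v n) by ring,
    abs_mul, abs_of_nonneg (by linarith : (0:ℝ) ≤ 1 - t), mul_div_assoc]

lemma rho_proj_mix (k : ℕ) (t : ℝ) (ht0 : 0 ≤ t) (ht1 : t ≤ 1) (u v : Iinf) :
    rho (proj k u) (proj k (mix t ht0 ht1 u v)) = (1 - t) * rho (proj k u) (proj k v) := by
  unfold rho
  rw [← tsum_mul_left]
  congr 1; funext n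
  by_cases hn : n < k
  · simp only [proj, if_pos hn, mix]
    rw [show (u n : ℝ) - ((1 - t) * (v n : ℝ) + t * (u n : ℝ)) = (1-t) * ((u n : ℝ) - v n) by ring,
      abs_mul, abs_of_nonneg (by linarith : (0:ℝ) ≤ 1 - t), mul_div_assoc]
  · simp [proj, if_neg hn]

/-- fiber description, Lemma `altAJR`(3,5,6).  In the adjusted inverse
sequence setup, with `B_{x,i} = N̄(p_{m_i,∞} x, 2δ_i) ∩ M_i` and
`B^#_{x,i} = N̄(p_{m_i,∞} x, ε_i) ∩ M_i`, one has, for every `x ∈ X`: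
(1) `B_{x,i} ⊆ B^#_{x,i}` and `h_i(B^#_{x,i+1}) ⊆ B_{x,i}`; and
(2) `π⁻¹(x) = lim (B_{x,i}, h_i) = lim (B^#_{x,i}, h_i)`, i.e. a thread is mapped to `x` by
`π` iff all its coordinates lie in the `B_{x,i}`, iff they all lie in the `B^#_{x,i}`. -/
theorem fiber_description
    (X : Set Iinf) (hXne : X.Nonempty) (hXc : IsCompact X)
    (m : ℕ → ℕ) (hm : StrictMono m)
    (ε δ : ℕ → ℝ) (hε : ∀ i, 0 < ε i) (hδ : ∀ i, 0 < δ i)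
    (hproj : ∀ (u v : Iinf) (i : ℕ), rho u v < ε (i + 1) →
      rho (proj (m i) u) (proj (m i) v) < δ i)
    (hε5 : ∀ i, 5 / 2 ^ m i < ε i) (hδ2 : ∀ i, δ i < 2 / 2 ^ m i)
    (M : ℕ → Set Iinf) (hMne : ∀ i, (M i).Nonempty) (hMc : ∀ i, IsCompact (M i))
    (hMcube : ∀ i, M i ⊆ cubeFin (m i))
    (η : ℕ → ℝ) (hη : ∀ i, 0 < η i) (hη0 : Tendsto η atTop (𝓝 0))
    (hMX : ∀ i, M i ⊆ nbhd X (η i))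
    (h : ∀ i, M (i + 1) → Iinf) (hhc : ∀ i, Continuous (h i))
    (hhmem : ∀ i u, h i u ∈ M i)
    (hhclose : ∀ i (u : M (i + 1)), rho (h i u) (proj (m i) (u : Iinf)) < δ i / 2)
    (π : {a : ∀ i, M i // ∀ i, h i (a (i + 1)) = (a i : Iinf)} → Iinf)
    (hπlim : ∀ w, Tendsto (fun i => (w.1 i : Iinf)) atTop (𝓝 (π w)))
    (hπX : ∀ w, π w ∈ X)
    (x : Iinf) (hx : x ∈ X) :
    ((∀ i, {y ∈ M i | rho y (proj (m i) x) ≤ 2 * δ i} ⊆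
        {y ∈ M i | rho y (proj (m i) x) ≤ ε i}) ∧
      (∀ i (u : M (i + 1)), rho (u : Iinf) (proj (m (i + 1)) x) ≤ ε (i + 1) →
        rho (h i u) (proj (m i) x) ≤ 2 * δ i)) ∧
    ∀ w : {a : ∀ i, M i // ∀ i, h i (a (i + 1)) = (a i : Iinf)},
      (π w = x ↔ ∀ i, rho (w.1 i : Iinf) (proj (m i) x) ≤ 2 * δ i) ∧
      (π w = x ↔ ∀ i, rho (w.1 i : Iinf) (proj (m i) x) ≤ ε i) := by
  
  classical
  -- sharpened projection estimate: `≤` version of `hproj`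
  have key1 : ∀ (u v : Iinf) (i : ℕ), rho u v ≤ ε (i + 1) →
      rho (proj (m i) u) (proj (m i) v) ≤ δ i := by
    intro u v i huv
    by_contra hcon
    push_neg at hcon
    set c := rho (proj (m i) u) (proj (m i) v) with hcdef
    have hc0 : 0 < c := (hδ i).trans hcon
    have hdc : δ i / c < 1 := (div_lt_one hc0).2 hcon
    have hdc0 : 0 < δ i / c := div_pos (hδ i) hc0
    set t : ℝ := (1 - δ i / c) / 2 with htdef
    have ht0 : 0 ≤ t := by rw [htdef]; linarith
    have ht0' : 0 < t := by rw [htdef]; linarith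
    have ht1 : t ≤ 1 := by rw [htdef]; linarith
    have hmix : rho u (mix t ht0 ht1 u v) < ε (i + 1) := by
      rw [rho_mix]
      have h1 : (1 - t) * rho u v ≤ (1 - t) * ε (i + 1) :=
        mul_le_mul_of_nonneg_left huv (by linarith)
      nlinarith [hε (i + 1)]
    have h2 := hproj u (mix t ht0 ht1 u v) i hmix
    rw [rho_proj_mix] at h2
    rw [← hcdef] at h2
    rw [htdef] at h2
    have : (1 - (1 - δ i / c) / 2) * c = (c + δ i) / 2 := by
      field_simp
      ring
    rw [this] at h2
    linarith
  have haux : ∀ i, (0:ℝ) < 1 / 2 ^ m i := fun i => by positivity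
  -- (1a)
  have part1a : ∀ i, {y ∈ M i | rho y (proj (m i) x) ≤ 2 * δ i} ⊆
      {y ∈ M i | rho y (proj (m i) x) ≤ ε i} := by
    intro i y hy
    refine ⟨hy.1, hy.2.trans ?_⟩
    have h45 : (4:ℝ) / 2 ^ m i ≤ 5 / 2 ^ m i := by gcongr; norm_num
    have h24 : 2 * (2 / 2 ^ m i) = (4:ℝ) / 2 ^ m i := by ring
    have := hδ2 i; have := hε5 i
    linarith
  -- (1b)
  have part1b : ∀ i (u : M (i + 1)), rho (u : Iinf) (proj (m (i + 1)) x) ≤ ε (i + 1) →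
      rho (h i u) (proj (m i) x) ≤ 2 * δ i := by
    intro i u hu
    have hle : m i ≤ m (i + 1) := (hm (Nat.lt_succ_self i)).le
    have h1 : rho (proj (m i) (u : Iinf)) (proj (m i) x) ≤ δ i := by
      have := key1 (u : Iinf) (proj (m (i + 1)) x) i hu
      rwa [proj_proj hle] at this
    have h2 := hhclose i u
    have h3 := rho_triangle (h i u) (proj (m i) (u : Iinf)) (proj (m i) x)
    have := hδ i
    linarith
  refine ⟨⟨part1a, part1b⟩, ?_⟩
  intro w
  set a : ℕ → Iinf := fun i => (w.1 i : Iinf) with hadef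
  -- convergence of the tail bound
  have h5lim : Tendsto (fun i => (5:ℝ) / 2 ^ m i) atTop (𝓝 0) := by
    have hbase : Tendsto (fun i : ℕ => (5:ℝ) * (1/2) ^ i) atTop (𝓝 0) := by
      have h0 := (tendsto_pow_atTop_nhds_zero_of_lt_one (by norm_num : (0:ℝ) ≤ 1/2)
        (by norm_num : (1:ℝ)/2 < 1)).const_mul (5:ℝ)
      rw [mul_zero] at h0
      exact h0
    apply squeeze_zero (fun i => by positivity) (fun i => ?_) hbase
    have h2i : (2:ℝ) ^ i ≤ 2 ^ m i := by
      apply pow_le_pow_right₀ (by norm_num) (hm.le_apply)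
    rw [show (5:ℝ) * (1/2) ^ i = 5 / 2 ^ i by rw [div_pow, one_pow]; ring]
    gcongr
  -- backward: 2δ-bounds imply π w = x
  have keyC : (∀ i, rho (a i) (proj (m i) x) ≤ 2 * δ i) → π w = x := by
    intro hall
    have hax : ∀ i, rho (a i) x ≤ 5 / 2 ^ m i := by
      intro i
      have h1 := rho_triangle (a i) (proj (m i) x) x
      have h2 : rho (proj (m i) x) x ≤ 1 / 2 ^ m i := rho_proj_self _ _
      have h3 : 2 * (2 / 2 ^ m i) + 1 / 2 ^ m i = (5:ℝ) / 2 ^ m i := by ring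
      have := hδ2 i
      linarith [hall i]
    have hrho0 : Tendsto (fun i => rho (a i) x) atTop (𝓝 0) :=
      squeeze_zero (fun i => rho_nonneg _ _) hax h5lim
    have hcoordx : ∀ n, Tendsto (fun i => ((a i n : ℝ))) atTop (𝓝 ((x n : ℝ))) := by
      intro n
      rw [tendsto_iff_dist_tendsto_zero]
      have hb : ∀ i, dist ((a i n : ℝ)) ((x n : ℝ)) ≤ 2 ^ (n + 1) * rho (a i) x := by
        intro i
        rw [Real.dist_eq]
        have := coord_le_rho (a i) x n
        rw [div_le_iff₀ (by positivity)] at this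
        linarith [this]
      have hlim2 : Tendsto (fun i => (2:ℝ) ^ (n + 1) * rho (a i) x) atTop (𝓝 0) := by
        simpa using hrho0.const_mul ((2:ℝ) ^ (n + 1))
      exact squeeze_zero (fun i => dist_nonneg) hb hlim2
    have hcoordπ : ∀ n, Tendsto (fun i => ((a i n : ℝ))) atTop (𝓝 ((π w n : ℝ))) := by
      intro n
      have hcont : Continuous (fun z : Iinf => ((z n : ℝ))) :=
        continuous_subtype_val.comp (continuous_apply n)
      exact (hcont.tendsto (π w)).comp (hπlim w)
    funext n
    exact Subtype.ext (tendsto_nhds_unique (hcoordπ n) (hcoordx n))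
  -- forward: π w = x implies ε-bounds
  have keyA : π w = x → ∀ i, rho (a i) (proj (m i) x) ≤ ε i := by
    intro hπ i
    -- step bound
    have hstep : ∀ j, rho (a j) (a (j + 1)) ≤ 2 / 2 ^ m j := by
      intro j
      have h1 := hhclose j (w.1 (j + 1))
      rw [w.2 j] at h1
      have h2 : rho (proj (m j) (a (j + 1))) (a (j + 1)) ≤ 1 / 2 ^ m j := rho_proj_self _ _
      have h3 := rho_triangle (a j) (proj (m j) (a (j + 1))) (a (j + 1))
      have := hδ2 j
      have h4 : 2 / 2 ^ m j / 2 = (1:ℝ) / 2 ^ m j := by ring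
      linarith
    -- chain bound
    have hchain : ∀ d, rho (a i) (a (i + d)) ≤ 4 / 2 ^ m i - 4 / 2 ^ m (i + d) := by
      intro d
      induction d with
      | zero => simp [rho_self]
      | succ d ih =>
        have h1 := rho_triangle (a i) (a (i + d)) (a (i + d + 1))
        have h2 := hstep (i + d)
        have h3 : 4 / 2 ^ m (i + d + 1) ≤ (2:ℝ) / 2 ^ m (i + d) := by
          have hm1 : m (i + d) + 1 ≤ m (i + d + 1) := hm (Nat.lt_succ_self (i + d))
          have h2p : (2:ℝ) ^ (m (i + d) + 1) ≤ 2 ^ m (i + d + 1) :=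
            pow_le_pow_right₀ (by norm_num) hm1
          rw [show (2:ℝ) / 2 ^ m (i + d) = 4 / 2 ^ (m (i + d) + 1) by rw [pow_succ]; ring]
          gcongr
        have heq : i + d + 1 = i + (d + 1) := by ring
        rw [heq] at h1 h2 h3
        have h5 : 4 / 2 ^ m (i + d) = 2 * ((2:ℝ) / 2 ^ m (i + d)) := by ring
        linarith
    have hbnd : ∀ j, i ≤ j → rho (a i) (a j) ≤ 4 / 2 ^ m i := by
      intro j hij
      have := hchain (j - i)
      rw [Nat.add_sub_cancel' hij] at this
      have h0 : (0:ℝ) < 4 / 2 ^ m j := by positivity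
      linarith
    -- coordinate convergence
    have hcoordx : ∀ n, Tendsto (fun j => ((a j n : ℝ))) atTop (𝓝 ((x n : ℝ))) := by
      intro n
      have hcont : Continuous (fun z : Iinf => ((z n : ℝ))) :=
        continuous_subtype_val.comp (continuous_apply n)
      have := (hcont.tendsto (π w)).comp (hπlim w)
      rwa [hπ] at this
    -- bound rho (a i) x by limiting over finite sums
    have hax : rho (a i) x ≤ 4 / 2 ^ m i := by
      apply Summable.tsum_le_of_sum_le (summable_rho _ _)
      intro s
      have htend : Tendsto (fun j => ∑ n ∈ s, |((a i n : ℝ)) - a j n| / 2 ^ (n + 1)) atTop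
          (𝓝 (∑ n ∈ s, |((a i n : ℝ)) - x n| / 2 ^ (n + 1))) := by
        apply tendsto_finset_sum
        intro n _
        have hcont : Continuous (fun r : ℝ => |((a i n : ℝ)) - r| / 2 ^ (n + 1)) :=
          ((continuous_const.sub continuous_id).abs).div_const _
        exact (hcont.tendsto _).comp (hcoordx n)
      apply le_of_tendsto htend
      filter_upwards [eventually_ge_atTop i] with j hj
      calc ∑ n ∈ s, |((a i n : ℝ)) - a j n| / 2 ^ (n + 1)
          ≤ rho (a i) (a j) :=
            Summable.sum_le_tsum s (fun n _ => by positivity) (summable_rho _ _)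
        _ ≤ 4 / 2 ^ m i := hbnd j hj
    have h1 := rho_triangle (a i) x (proj (m i) x)
    have h2 : rho x (proj (m i) x) ≤ 1 / 2 ^ m i := by
      rw [rho_symm]; exact rho_proj_self _ _
    have := hε5 i
    have h4 : 4 / 2 ^ m i + 1 / 2 ^ m i = (5:ℝ) / 2 ^ m i := by ring
    linarith
  -- assemble the two iffs
  have fwd2δ : π w = x → ∀ i, rho (a i) (proj (m i) x) ≤ 2 * δ i := by
    intro hπ i
    have := part1b i (w.1 (i + 1)) (keyA hπ (i + 1))
    rwa [w.2 i] at this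
  have bwdε : (∀ i, rho (a i) (proj (m i) x) ≤ ε i) → π w = x := by
    intro hall
    apply keyC
    intro i
    have := part1b i (w.1 (i + 1)) (hall (i + 1))
    rwa [w.2 i] at this
  exact ⟨⟨fwd2δ, keyC⟩, ⟨keyA, bwdε⟩⟩
end
end
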